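/- arXiv:1503.06588 — 7 statements merged into one kernel-verified Lean document; each statement's English description precedes it below -/
import Mathlib

section
/- Let y < z < x be real numbers such that (a+b)z = ax + by for some nonnegative integers a, b. Then there exists a finite sequence (z_1, ..., z_{a+b}) of real numbers which has exactly a terms equal to x and exactly b terms equal to y, such that for all k = 1, ..., a+b, we have |z_1 + ... + z_k - kz| ≤ x - y. -/
/-- Balancing lemma: if `(a+b)z = ax+by` with `y < z < x`, there is an arrangement of
`a` copies of `x` and `b` copies of `y` whose partial sums stay within `x - y` of `kz`. -/
theorem stmt_0 (x y z : ℝ) (a b : ℕ) (hyz : y < z) (hzx : z < x)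
    (havg : ((a : ℝ) + b) * z = a * x + b * y) :
    ∃ zs : ℕ → ℝ,
      ((Finset.range (a + b)).filter (fun i => zs i = x)).card = a ∧
      ((Finset.range (a + b)).filter (fun i => zs i = y)).card = b ∧
      ∀ k : ℕ, 1 ≤ k → k ≤ a + b →
        |(∑ i ∈ Finset.range k, zs i) - k * z| ≤ x - y := by
  rcases Nat.eq_zero_or_pos (a + b) with hn0 | hn
  · obtain ⟨ha, hb⟩ := Nat.add_eq_zero.mp hn0
    subst ha; subst hb
    exact ⟨fun _ => 0, by simp, by simp, fun k hk1 hk2 => by omega⟩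
  set n := a + b with hnd
  have hxy : (0:ℝ) < x - y := by linarith
  have hxny : x ≠ y := by intro h; linarith
  have hnR : (0:ℝ) < (n:ℝ) := by exact_mod_cast hn
  set c : ℕ → ℕ := fun k => (k * a + n - 1) / n with hc
  have key : ∀ k, k * a ≤ n * c k ∧ n * c k ≤ k * a + n - 1 := by
    intro k
    have h1 : c k * n ≤ k * a + n - 1 := Nat.div_mul_le_self _ _
    have h2 : k * a + n - 1 < c k * n + n := Nat.lt_div_mul_add hn
    have h3 : n * c k = c k * n := Nat.mul_comm _ _
    set m := k * a
    constructor <;> omega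
  have hmono : ∀ k, c k ≤ c (k+1) := by
    intro k
    apply Nat.div_le_div_right
    have : k * a ≤ (k+1) * a := Nat.mul_le_mul_right a (Nat.le_succ k)
    omega
  have hstep : ∀ k, c (k+1) ≤ c k + 1 := by
    intro k
    have h1 : (k+1) * a + n - 1 ≤ (k * a + n - 1) + n := by
      have h2 : (k+1) * a = k * a + a := by ring
      have h3 : a ≤ n := by omega
      omega
    calc c (k+1) ≤ ((k * a + n - 1) + n) / n := Nat.div_le_div_right h1
      _ = c k + 1 := Nat.add_div_right _ hn
  have hc0 : c 0 = 0 := by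
    show (0 * a + n - 1) / n = 0
    apply Nat.div_eq_of_lt
    omega
  have hcn : c n = a := by
    show (n * a + n - 1) / n = a
    have h : n * a + n - 1 = n * a + (n - 1) := by omega
    rw [h, Nat.mul_add_div hn, Nat.div_eq_of_lt (by omega)]
    omega
  set zs : ℕ → ℝ := fun i => if c i < c (i+1) then x else y with hzs
  have hzsx : ∀ i, (zs i = x) ↔ c i < c (i+1) := by
    intro i
    by_cases h : c i < c (i+1) <;> simp [hzs, h, hxny.symm]
  have hzsy : ∀ i, (zs i = y) ↔ ¬ (c i < c (i+1)) := by
    intro i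
    by_cases h : c i < c (i+1) <;> simp [hzs, h, hxny]
  have hcount : ∀ k, ((Finset.range k).filter (fun i => c i < c (i+1))).card = c k := by
    intro k
    induction k with
    | zero => simp [hc0]
    | succ k ih =>
      rw [Finset.range_add_one, Finset.filter_insert]
      by_cases h : c k < c (k+1)
      · rw [if_pos h, Finset.card_insert_of_notMem (by simp), ih]
        have := hstep k
        omega
      · rw [if_neg h, ih]
        have := hmono k
        omega
  have hcountx : ∀ k, ((Finset.range k).filter (fun i => zs i = x)).card = c k := by
    intro k
    rw [Finset.filter_congr (fun i _ => by rw [hzsx i])]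
    exact hcount k
  refine ⟨zs, ?_, ?_, ?_⟩
  · rw [hcountx n, hcn]
  · rw [Finset.filter_congr (fun i _ => by rw [hzsy i])]
    rw [Finset.filter_not, Finset.card_sdiff_of_subset (Finset.filter_subset _ _)]
    rw [Finset.card_range, hcount n, hcn]
    omega
  · intro k hk1 hk2
    have hsum : ∀ m, (∑ i ∈ Finset.range m, zs i) = (c m : ℝ) * (x - y) + m * y := by
      intro m
      induction m with
      | zero => simp [hc0]
      | succ m ih =>
        rw [Finset.sum_range_succ, ih]
        by_cases h : c m < c (m+1)
        · have h1 : c (m+1) = c m + 1 := by have := hstep m; omega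
          simp only [hzs, if_pos h, h1]
          push_cast
          ring
        · have h1 : c (m+1) = c m := by have := hmono m; omega
          simp only [hzs, if_neg h, h1]
          push_cast
          ring
    rw [hsum k]
    have hz : (n:ℝ) * z = a * x + b * y := by
      rw [hnd]; push_cast; linarith
    have hna : (n:ℝ) = a + b := by rw [hnd]; push_cast; ring
    obtain ⟨hk1', hk2'⟩ := key k
    have h1 : (k:ℝ) * a ≤ (n:ℝ) * c k := by exact_mod_cast hk1'
    have h2 : (n:ℝ) * c k ≤ (k:ℝ) * a + n - 1 := by
      have : n * c k + 1 ≤ k * a + n := by omega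
      have := (Nat.cast_le (α := ℝ)).mpr this
      push_cast at this
      linarith
    set t : ℝ := (n:ℝ) * c k - k * a with ht
    have ht0 : 0 ≤ t := by linarith
    have htn : t ≤ (n:ℝ) := by linarith
    have heq : (c k : ℝ) * (x - y) + k * y - k * z = t / n * (x - y) := by
      field_simp
      linear_combination (-(k:ℝ)) * hz + ((k:ℝ) * y) * hna
    rw [heq, abs_of_nonneg (by positivity)]
    calc t / n * (x - y) ≤ 1 * (x - y) := by
          apply mul_le_mul_of_nonneg_right _ hxy.le
          rw [div_le_one hnR]; exact htn
      _ = x - y := one_mul _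
end

section
/- The sequence (z_k)_{k≥1} constructed by the greedy rule — z_1 = x, and z_{k+1} = y if z_1 + ... + z_k ≥ kz, z_{k+1} = x otherwise — satisfies |z_1 + ... + z_k - kz| ≤ x - y for all k ≥ 1, where y < z < x. -/
/-- The greedy sequence `z₁ = x`, `z_{k+1} = y` if the partial sum is `≥ kz` and `x`
otherwise, keeps all partial sums within `x - y` of `kz`. -/
theorem stmt_2 (x y z : ℝ) (hyz : y < z) (hzx : z < x) (zs : ℕ → ℝ)
    (h1 : zs 0 = x)
    (hrec : ∀ k : ℕ, 1 ≤ k →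
      zs k = if (∑ i ∈ Finset.range k, zs i) ≥ k * z then y else x) :
    ∀ k : ℕ, 1 ≤ k → |(∑ i ∈ Finset.range k, zs i) - k * z| ≤ x - y := by
  intro k hk
  induction k with
  | zero => omega
  | succ n ih =>
    rcases Nat.eq_or_lt_of_le hk with h | h
    · -- n = 0
      have hn : n = 0 := by omega
      subst hn
      simp [Finset.sum_range_one, h1]
      rw [abs_le]
      constructor <;> linarith
    · have hn : 1 ≤ n := by omega
      have ihn := ih hn
      rw [Finset.sum_range_succ, hrec n hn]
      rw [abs_le] at ihn ⊢
      push_cast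
      split_ifs with hge
      · constructor <;> nlinarith
      · push_neg at hge
        constructor <;> nlinarith
end

section
/- Fix α ≥ 0 and define the Grushin quasidistance d_α on ℝ² by d_α((x₁,x₂),(y₁,y₂)) = |x₁ - y₁| + min( |x₂ - y₂|^{1/(1+α)}, |x₂ - y₂| / |x₁|^α ) (interpreting the second term as |x₂-y₂|^{1/(1+α)} when x₁ = 0). Then d_α is a quasimetric: it is symmetric up to a multiplicative constant, vanishes exactly on the diagonal, and satisfies a quasi-triangle inequality d_α(x, z) ≤ C (d_α(x, y) + d_α(y, z)) for a constant C depending only on α. -/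
open Real

/-- The Grushin quasidistance on `ℝ²`; the second entry of the `min` is interpreted
as `+∞` (i.e. dropped) when `x₁ = 0`. -/
noncomputable def grushinDist (α : ℝ) (x y : ℝ × ℝ) : ℝ :=
  |x.1 - y.1| +
    if x.1 = 0 then |x.2 - y.2| ^ (1 / (1 + α))
    else min (|x.2 - y.2| ^ (1 / (1 + α))) (|x.2 - y.2| / |x.1| ^ α)

noncomputable def gF (α a t : ℝ) : ℝ :=
  if a = 0 then t ^ (1 / (1 + α)) else min (t ^ (1 / (1 + α))) (t / a ^ α)

variable {α a b s t u : ℝ}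

lemma gF_grushin (α : ℝ) (x y : ℝ × ℝ) :
    grushinDist α x y = |x.1 - y.1| + gF α |x.1| |x.2 - y.2| := by
  simp [grushinDist, gF, abs_eq_zero]

lemma hp_pos (hα : 0 ≤ α) : 0 < 1 / (1 + α) := by positivity

lemma hp_le_one (hα : 0 ≤ α) : 1 / (1 + α) ≤ 1 := by
  rw [div_le_one (by linarith)]; linarith

lemma gF_nonneg (hα : 0 ≤ α) (ha : 0 ≤ a) (ht : 0 ≤ t) : 0 ≤ gF α a t := by
  unfold gF
  split
  · exact rpow_nonneg ht _
  · exact le_min (rpow_nonneg ht _) (div_nonneg ht (rpow_nonneg ha _))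

lemma gF_le_rpow (hα : 0 ≤ α) : gF α a t ≤ t ^ (1 / (1 + α)) := by
  unfold gF; split
  · exact le_rfl
  · exact min_le_left _ _

lemma gF_eq_zero_iff (hα : 0 ≤ α) (ha : 0 ≤ a) (ht : 0 ≤ t) :
    gF α a t = 0 ↔ t = 0 := by
  have hp := hp_pos hα
  constructor
  · intro h
    unfold gF at h
    split at h
    · rwa [rpow_eq_zero ht (ne_of_gt hp)] at h
    · rename_i ha0
      have ha' : 0 < a := lt_of_le_of_ne ha (Ne.symm ha0)
      rcases min_eq_iff.1 h with ⟨h1, _⟩ | ⟨h1, _⟩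
      · rwa [rpow_eq_zero ht (ne_of_gt hp)] at h1
      · have := rpow_pos_of_pos ha' α
        field_simp at h1
        simpa using h1
  · rintro rfl
    unfold gF
    rw [zero_rpow (ne_of_gt hp), zero_div]
    split <;> simp

lemma gF_anti (hα : 0 ≤ α) (ha : 0 ≤ a) (hab : a ≤ b) (ht : 0 ≤ t) :
    gF α b t ≤ gF α a t := by
  unfold gF
  rcases eq_or_lt_of_le ha with h0 | ha'
  · simp only [← h0, if_pos rfl]  -- a = 0
    split
    · exact le_rfl
    · exact min_le_left _ _
  · have hb' : 0 < b := lt_of_lt_of_le ha' hab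
    rw [if_neg (ne_of_gt ha'), if_neg (ne_of_gt hb')]
    exact min_le_min le_rfl
      (div_le_div_of_nonneg_left ht (rpow_pos_of_pos ha' α) (by gcongr) |>.trans le_rfl)

lemma gF_mono (hα : 0 ≤ α) (ha : 0 ≤ a) (ht : 0 ≤ t) (htu : t ≤ u) :
    gF α a t ≤ gF α a u := by
  unfold gF
  split
  · exact rpow_le_rpow ht htu (le_of_lt (hp_pos hα))
  · exact min_le_min (rpow_le_rpow ht htu (le_of_lt (hp_pos hα)))
      (div_le_div_of_nonneg_right htu (rpow_nonneg ha α) |>.trans le_rfl)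

lemma gF_double (hα : 0 ≤ α) (ha : 0 ≤ a) (ht : 0 ≤ t) :
    gF α a (2 * t) ≤ 2 * gF α a t := by
  have key : (2 * t) ^ (1 / (1 + α)) ≤ 2 * t ^ (1 / (1 + α)) := by
    rw [mul_rpow (by norm_num) ht]
    have h2 : (2:ℝ) ^ (1 / (1 + α)) ≤ 2 := by
      calc (2:ℝ) ^ (1 / (1 + α)) ≤ 2 ^ (1:ℝ) :=
        rpow_le_rpow_of_exponent_le one_le_two (hp_le_one hα)
      _ = 2 := rpow_one 2
    exact mul_le_mul_of_nonneg_right h2 (rpow_nonneg ht _)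
  unfold gF
  split
  · exact key
  · refine le_trans (min_le_min key (le_of_eq (mul_div_assoc 2 t _))) ?_
    rw [mul_min_of_nonneg _ _ (by norm_num : (0:ℝ) ≤ 2)]

lemma key_eq (hα : 0 ≤ α) (ht : 0 < t) :
    t / (t ^ (1 / (1 + α))) ^ α = t ^ (1 / (1 + α)) := by
  have h1 : (0:ℝ) < 1 + α := by linarith
  rw [← rpow_mul ht.le]
  nth_rewrite 1 [← rpow_one t]
  rw [← rpow_sub ht]
  congr 1
  field_simp
  ring

lemma gF_le_div_max (hα : 0 ≤ α) (ha : 0 ≤ a) (ht : 0 ≤ t) :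
    gF α a t ≤ t / (max a (t ^ (1 / (1 + α)))) ^ α := by
  rcases ht.eq_or_lt with rfl | ht'
  · rw [zero_div]
    exact le_of_eq ((gF_eq_zero_iff hα ha le_rfl).2 rfl)
  · have htp : 0 < t ^ (1 / (1 + α)) := rpow_pos_of_pos ht' _
    rcases ha.eq_or_lt with rfl | ha'
    · rw [max_eq_right htp.le, key_eq hα ht']
      exact gF_le_rpow hα
    · rcases le_total a (t ^ (1 / (1 + α))) with h | h
      · rw [max_eq_right h, key_eq hα ht']
        exact gF_le_rpow hα
      · rw [max_eq_left h]
        unfold gF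
        rw [if_neg (ne_of_gt ha')]
        exact min_le_right _ _

lemma gF_quasi (hα : 0 ≤ α) (ha : 0 ≤ a) (hb : 0 ≤ b) (hs : 0 ≤ s) (ht : 0 ≤ t)
    (hbas : b ≤ a + s) : gF α a t ≤ 2 ^ α * (s + gF α b t) := by
  have h1 : (1:ℝ) ≤ 2 ^ α := by
    calc (1:ℝ) = 2 ^ (0:ℝ) := (rpow_zero 2).symm
    _ ≤ 2 ^ α := rpow_le_rpow_of_exponent_le one_le_two hα
  have hFb : 0 ≤ gF α b t := gF_nonneg hα hb ht
  rcases le_or_gt b a with hba | hab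
  · calc gF α a t ≤ gF α b t := gF_anti hα hb hba ht
    _ ≤ s + gF α b t := le_add_of_nonneg_left hs
    _ ≤ 2 ^ α * (s + gF α b t) := le_mul_of_one_le_left (add_nonneg hs hFb) h1
  · rcases le_or_gt (t ^ (1 / (1 + α))) s with hts | hst
    · calc gF α a t ≤ t ^ (1 / (1 + α)) := gF_le_rpow hα
      _ ≤ s := hts
      _ ≤ s + gF α b t := le_add_of_nonneg_right hFb
      _ ≤ 2 ^ α * (s + gF α b t) := le_mul_of_one_le_left (add_nonneg hs hFb) h1
    · have ht' : 0 < t := by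
        rcases ht.eq_or_lt with rfl | h
        · rw [zero_rpow (ne_of_gt (hp_pos hα))] at hst; linarith
        · exact h
      set m := max a (t ^ (1 / (1 + α))) with hm
      have htp : 0 < t ^ (1 / (1 + α)) := rpow_pos_of_pos ht' _
      have hmp : 0 < m := lt_max_of_lt_right htp
      have htm : t ^ (1 / (1 + α)) ≤ m := le_max_right _ _
      have hb2 : b ≤ 2 * m := by
        have h2 : a ≤ m := le_max_left _ _
        have h3 : s ≤ m := le_trans hst.le htm
        linarith
      have h2m : gF α (2 * m) t = t / (2 * m) ^ α := by
        unfold gF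
        rw [if_neg (by positivity)]
        refine min_eq_right ?_
        have hpow : (t ^ (1 / (1 + α))) ^ α ≤ (2 * m) ^ α :=
          rpow_le_rpow htp.le (by linarith) hα
        calc t / (2 * m) ^ α ≤ t / (t ^ (1 / (1 + α))) ^ α :=
          div_le_div_of_nonneg_left ht (rpow_pos_of_pos htp α) hpow
        _ = t ^ (1 / (1 + α)) := key_eq hα ht'
      have h2ne : ((2:ℝ) ^ α) ≠ 0 := (rpow_pos_of_pos two_pos α).ne'
      have hmne : (m ^ α) ≠ 0 := (rpow_pos_of_pos hmp α).ne'
      calc gF α a t ≤ t / m ^ α := gF_le_div_max hα ha ht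
      _ = 2 ^ α * (t / (2 * m) ^ α) := by
        rw [mul_rpow (by norm_num : (0:ℝ) ≤ 2) hmp.le]
        field_simp
      _ = 2 ^ α * gF α (2 * m) t := by rw [h2m]
      _ ≤ 2 ^ α * gF α b t :=
        mul_le_mul_of_nonneg_left (gF_anti hα hb hb2 ht) (by positivity)
      _ ≤ 2 ^ α * (s + gF α b t) :=
        mul_le_mul_of_nonneg_left (le_add_of_nonneg_left hs) (by positivity)

lemma gF_add (hα : 0 ≤ α) (ha : 0 ≤ a) (ht : 0 ≤ t) (hu : 0 ≤ u) :
    gF α a (t + u) ≤ 2 * (gF α a t + gF α a u) := by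
  have hFt := gF_nonneg hα ha ht
  have hFu := gF_nonneg hα ha hu
  rcases le_total t u with h | h
  · calc gF α a (t + u) ≤ gF α a (2 * u) :=
      gF_mono hα ha (by linarith) (by linarith)
    _ ≤ 2 * gF α a u := gF_double hα ha hu
    _ ≤ 2 * (gF α a t + gF α a u) := by linarith
  · calc gF α a (t + u) ≤ gF α a (2 * t) :=
      gF_mono hα ha (by linarith) (by linarith)
    _ ≤ 2 * gF α a t := gF_double hα ha ht
    _ ≤ 2 * (gF α a t + gF α a u) := by linarith

/-- The Grushin quasidistance is a quasimetric. -/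
theorem stmt_5 (α : ℝ) (hα : 0 ≤ α) :
    ∃ C : ℝ, 1 ≤ C ∧
      (∀ x y : ℝ × ℝ, grushinDist α x y = 0 ↔ x = y) ∧
      (∀ x y : ℝ × ℝ, grushinDist α x y ≤ C * grushinDist α y x) ∧
      (∀ x y z : ℝ × ℝ,
        grushinDist α x z ≤ C * (grushinDist α x y + grushinDist α y z)) := by
  have h1 : (1:ℝ) ≤ 2 ^ α := by
    calc (1:ℝ) = 2 ^ (0:ℝ) := (rpow_zero 2).symm
    _ ≤ 2 ^ α := rpow_le_rpow_of_exponent_le one_le_two hα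
  refine ⟨1 + 2 * 2 ^ α, by linarith, ?_, ?_, ?_⟩
  · intro x y
    rw [gF_grushin]
    constructor
    · intro h
      have ha := abs_nonneg (x.1 - y.1)
      have hg := gF_nonneg hα (abs_nonneg x.1) (abs_nonneg (x.2 - y.2))
      have h1' : |x.1 - y.1| = 0 := by linarith
      have h2' : gF α |x.1| |x.2 - y.2| = 0 := by linarith
      have h3' : |x.2 - y.2| = 0 :=
        (gF_eq_zero_iff hα (abs_nonneg x.1) (abs_nonneg _)).1 h2'
      rw [abs_eq_zero, sub_eq_zero] at h1' h3'
      exact Prod.ext h1' h3'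
    · rintro rfl
      rw [sub_self, abs_zero, sub_self, abs_zero,
        (gF_eq_zero_iff hα (abs_nonneg x.1) le_rfl).2 rfl, add_zero]
  · intro x y
    rw [gF_grushin, gF_grushin]
    have hba : |y.1| ≤ |x.1| + |x.1 - y.1| := by
      have := abs_sub_abs_le_abs_sub y.1 x.1
      rw [abs_sub_comm y.1 x.1] at this
      linarith
    have hq := gF_quasi hα (abs_nonneg x.1) (abs_nonneg y.1)
      (abs_nonneg (x.1 - y.1)) (abs_nonneg (x.2 - y.2)) hba
    have hsw1 : |y.1 - x.1| = |x.1 - y.1| := abs_sub_comm _ _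
    have hsw2 : |y.2 - x.2| = |x.2 - y.2| := abs_sub_comm _ _
    rw [hsw1, hsw2]
    have hFb := gF_nonneg hα (abs_nonneg y.1) (abs_nonneg (x.2 - y.2))
    have hs := abs_nonneg (x.1 - y.1)
    nlinarith [mul_nonneg (sub_nonneg.2 h1) hs, mul_nonneg (sub_nonneg.2 h1) hFb,
      mul_nonneg (le_trans zero_le_one h1) hs, mul_nonneg (le_trans zero_le_one h1) hFb]
  · intro x y z
    rw [gF_grushin, gF_grushin, gF_grushin]
    have hT : |x.2 - z.2| ≤ |x.2 - y.2| + |y.2 - z.2| := abs_sub_le _ _ _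
    have hS : |x.1 - z.1| ≤ |x.1 - y.1| + |y.1 - z.1| := abs_sub_le _ _ _
    have hba : |y.1| ≤ |x.1| + |x.1 - y.1| := by
      have := abs_sub_abs_le_abs_sub y.1 x.1
      rw [abs_sub_comm y.1 x.1] at this
      linarith
    have step1 : gF α |x.1| |x.2 - z.2| ≤
        2 * (gF α |x.1| |x.2 - y.2| + gF α |x.1| |y.2 - z.2|) := by
      calc gF α |x.1| |x.2 - z.2| ≤ gF α |x.1| (|x.2 - y.2| + |y.2 - z.2|) :=
        gF_mono hα (abs_nonneg _) (abs_nonneg _) hT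
      _ ≤ _ := gF_add hα (abs_nonneg _) (abs_nonneg _) (abs_nonneg _)
    have step2 : gF α |x.1| |y.2 - z.2| ≤
        2 ^ α * (|x.1 - y.1| + gF α |y.1| |y.2 - z.2|) :=
      gF_quasi hα (abs_nonneg x.1) (abs_nonneg y.1) (abs_nonneg _) (abs_nonneg _) hba
    have hFat := gF_nonneg hα (abs_nonneg x.1) (abs_nonneg (x.2 - y.2))
    have hFbu := gF_nonneg hα (abs_nonneg y.1) (abs_nonneg (y.2 - z.2))
    have hs1 := abs_nonneg (x.1 - y.1)
    have hs2 := abs_nonneg (y.1 - z.1)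
    nlinarith [mul_nonneg (sub_nonneg.2 h1) hFat, mul_nonneg (sub_nonneg.2 h1) hFbu,
      mul_nonneg (le_trans zero_le_one h1) hs2, mul_nonneg (le_trans zero_le_one h1) hs1,
      mul_nonneg (sub_nonneg.2 h1) hs1, mul_nonneg (sub_nonneg.2 h1) hs2,
      mul_nonneg (le_trans zero_le_one h1) hFat, mul_nonneg (le_trans zero_le_one h1) hFbu]
end

section
/- Suppose F : ℝ^{N+2} → ℝ^{N+2} is an η-quasisymmetric homeomorphism and λ > 1, α ≥ 0 are such that for every x = (x', x'') ∈ ℝ^{N+1} × ℝ with |x'| ≠ 0, the restriction of |x'|^{α/(1+α)} F to the ball B(x, |x'|/2) is λ-bi-Lipschitz. Then there exists λ' > 1 depending only on λ, η, and a bound on α, such that (λ')^{-1} |x - y|^{1/(1+α)} ≤ |F(x) - F(y)| ≤ λ' |x - y|^{1/(1+α)} for all x = (x', x''), y = (y', y'') with |x'' - y''| ≥ (1/2) max(|x'|, |y'|). -/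
open Metric

/-- Projection of `ℝ^{N+2}` onto its first `N+1` coordinates. -/
def firstCoords (N : ℕ) (x : EuclideanSpace ℝ (Fin (N + 2))) :
    EuclideanSpace ℝ (Fin (N + 1)) := WithLp.toLp 2 (fun i : Fin (N + 1) => x i.castSucc)

/-- The last coordinate of a point of `ℝ^{N+2}`. -/
def lastCoord (N : ℕ) (x : EuclideanSpace ℝ (Fin (N + 2))) : ℝ := x (Fin.last (N + 1))

lemma abs_coord_le_norm' {n : ℕ} (x : EuclideanSpace ℝ (Fin n)) (i : Fin n) : |x i| ≤ ‖x‖ := by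
  rw [EuclideanSpace.norm_eq]
  have h : |x i| = Real.sqrt (‖x i‖ ^ 2) := by
    rw [Real.sqrt_sq (norm_nonneg _), Real.norm_eq_abs]
  rw [h]
  exact Real.sqrt_le_sqrt
    (Finset.single_le_sum (f := fun j => ‖x j‖ ^ 2) (fun j _ => by positivity)
      (Finset.mem_univ i))

lemma firstCoords_add' (N : ℕ) (x y : EuclideanSpace ℝ (Fin (N + 2))) :
    firstCoords N (x + y) = firstCoords N x + firstCoords N y := by
  ext i; simp [firstCoords]

lemma firstCoords_single' (N : ℕ) :
    firstCoords N (EuclideanSpace.single (0 : Fin (N + 2)) (1 : ℝ))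
      = EuclideanSpace.single (0 : Fin (N + 1)) (1 : ℝ) := by
  ext i
  simp [firstCoords, EuclideanSpace.single_apply, Fin.castSucc_eq_zero_iff]

/-- Corollary 4.2: a quasisymmetric map which is locally a rescaled bi-Lipschitz map
away from the axis `{x' = 0}` is `(1/(1+α))`-snowflaking for pairs of points whose
vertical separation dominates. -/
theorem stmt_8 (N : ℕ) (α lam : ℝ) (hα : 0 ≤ α) (hlam : 1 < lam)
    (F : EuclideanSpace ℝ (Fin (N + 2)) → EuclideanSpace ℝ (Fin (N + 2)))
    (hhomeo : Continuous F ∧ Function.Bijective F)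
    (η : ℝ → ℝ) (hη₀ : η 0 = 0) (hηmono : StrictMonoOn η (Set.Ici 0))
    (hηcont : ContinuousOn η (Set.Ici 0)) (hηsurj : Set.Ici (0:ℝ) ⊆ η '' Set.Ici 0)
    (hqs : ∀ x a b : EuclideanSpace ℝ (Fin (N + 2)), ∀ t : ℝ, 0 < t →
      ‖x - a‖ ≤ t * ‖x - b‖ → ‖F x - F a‖ ≤ η t * ‖F x - F b‖)
    (hbl : ∀ x : EuclideanSpace ℝ (Fin (N + 2)), ‖firstCoords N x‖ ≠ 0 →
      ∀ u ∈ ball x (‖firstCoords N x‖ / 2), ∀ v ∈ ball x (‖firstCoords N x‖ / 2),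
        lam⁻¹ * ‖u - v‖ ≤ ‖firstCoords N x‖ ^ (α / (1 + α)) * ‖F u - F v‖ ∧
        ‖firstCoords N x‖ ^ (α / (1 + α)) * ‖F u - F v‖ ≤ lam * ‖u - v‖) :
    ∃ lam' : ℝ, 1 < lam' ∧
      ∀ x y : EuclideanSpace ℝ (Fin (N + 2)),
        |lastCoord N x - lastCoord N y| ≥
          (1 / 2) * max ‖firstCoords N x‖ ‖firstCoords N y‖ →
        lam'⁻¹ * ‖x - y‖ ^ (1 / (1 + α)) ≤ ‖F x - F y‖ ∧
        ‖F x - F y‖ ≤ lam' * ‖x - y‖ ^ (1 / (1 + α)) := by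
  have h1α : (0:ℝ) < 1 + α := by linarith
  have hβ0 : 0 ≤ α / (1 + α) := by positivity
  have hβ1 : α / (1 + α) ≤ 1 := by
    rw [div_le_one h1α]; linarith
  have hsum : α / (1 + α) + 1 / (1 + α) = 1 := by
    field_simp
    ring
  have hlam0 : (0:ℝ) < lam := by linarith
  have hηpos : ∀ t : ℝ, 0 < t → 0 < η t := by
    intro t ht
    have := hηmono (Set.mem_Ici.2 le_rfl) (Set.mem_Ici.2 ht.le) ht
    rwa [hη₀] at this
  have hA : 0 < lam * η (1/2) * η 9 := by
    have := hηpos (1/2) (by norm_num)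
    have := hηpos 9 (by norm_num)
    positivity
  have hB : 0 < 15 * lam * η (1/9) * η 3 := by
    have := hηpos (1/9) (by norm_num)
    have := hηpos 3 (by norm_num)
    positivity
  refine ⟨1 + lam * η (1/2) * η 9 + 15 * lam * η (1/9) * η 3, by linarith, ?_⟩
  set lam' := 1 + lam * η (1/2) * η 9 + 15 * lam * η (1/9) * η 3 with hlam'def
  have hlam'0 : 0 < lam' := by rw [hlam'def]; linarith
  intro x y hxy
  by_cases hxy0 : x = y
  · subst hxy0
    simp only [sub_self, norm_zero]
    rw [Real.zero_rpow (by positivity)]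
    constructor <;> simp
  · have hd0 : 0 < ‖x - y‖ := by
      rw [norm_pos_iff]; exact sub_ne_zero_of_ne hxy0
    set d := ‖x - y‖ with hddef
    -- the vertical separation is at most d
    have hlast : |lastCoord N x - lastCoord N y| ≤ d := by
      have : lastCoord N x - lastCoord N y = (x - y) (Fin.last (N+1)) := rfl
      rw [this]
      exact abs_coord_le_norm' (x - y) _
    have hx' : ‖firstCoords N x‖ ≤ 2 * d := by
      have h1 : ‖firstCoords N x‖ ≤ max ‖firstCoords N x‖ ‖firstCoords N y‖ := le_max_left _ _
      have := le_trans (le_trans (by linarith [hxy] : (1/2) * ‖firstCoords N x‖ ≤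
        |lastCoord N x - lastCoord N y|) hlast) (le_refl d)
      linarith
    -- auxiliary points
    set E : EuclideanSpace ℝ (Fin (N + 2)) := EuclideanSpace.single (0 : Fin (N + 2)) (1:ℝ)
      with hEdef
    have hEnorm : ‖E‖ = 1 := by
      rw [hEdef, EuclideanSpace.norm_single, norm_one]
    set p : EuclideanSpace ℝ (Fin (N + 2)) := x + (3*d) • E with hpdef
    set v : EuclideanSpace ℝ (Fin (N + 2)) := p + (d/3) • E with hvdef
    have hxp : ‖x - p‖ = 3 * d := by
      have : x - p = -((3*d) • E) := by rw [hpdef]; abel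
      rw [this, norm_neg, norm_smul, hEnorm, Real.norm_eq_abs, mul_one,
        abs_of_pos (by linarith)]
    have hpx : ‖p - x‖ = 3 * d := by
      rw [norm_sub_rev, hxp]
    have hpv : ‖p - v‖ = d / 3 := by
      have : p - v = -((d/3) • E) := by rw [hvdef]; abel
      rw [this, norm_neg, norm_smul, hEnorm, Real.norm_eq_abs, mul_one,
        abs_of_pos (by positivity)]
    -- norm of first coordinates of p
    have hfcp : firstCoords N p = firstCoords N x
        + (3*d) • EuclideanSpace.single (0 : Fin (N + 1)) (1:ℝ) := by
      rw [hpdef, firstCoords_add']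
      congr 1
      have : firstCoords N ((3*d) • E) = (3*d) • firstCoords N E := by
        ext i; simp [firstCoords]
      rw [this, hEdef, firstCoords_single']
    have hsnorm : ‖(3*d) • EuclideanSpace.single (0 : Fin (N + 1)) (1:ℝ)‖ = 3 * d := by
      rw [norm_smul, EuclideanSpace.norm_single, norm_one, Real.norm_eq_abs, mul_one,
        abs_of_pos (by linarith)]
    set r := ‖firstCoords N p‖ with hrdef
    have hr1 : d ≤ r := by
      have heq : (3*d) • EuclideanSpace.single (0 : Fin (N + 1)) (1:ℝ)
          = firstCoords N p - firstCoords N x := by rw [hfcp]; abel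
      have h1 : 3 * d ≤ ‖firstCoords N p‖ + ‖firstCoords N x‖ := by
        calc 3 * d = ‖firstCoords N p - firstCoords N x‖ := by rw [← heq, hsnorm]
          _ ≤ ‖firstCoords N p‖ + ‖firstCoords N x‖ := norm_sub_le _ _
      linarith
    have hr2 : r ≤ 5 * d := by
      have h1 : ‖firstCoords N p‖ ≤ ‖firstCoords N x‖
          + ‖(3*d) • EuclideanSpace.single (0 : Fin (N + 1)) (1:ℝ)‖ := by
        rw [hfcp]; exact norm_add_le _ _
      rw [hsnorm] at h1
      linarith
    have hr0 : 0 < r := lt_of_lt_of_le hd0 hr1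
    -- apply the bi-Lipschitz hypothesis at p
    have hpmem : p ∈ ball p (r / 2) := mem_ball_self (by positivity)
    have hvmem : v ∈ ball p (r / 2) := by
      rw [mem_ball, dist_eq_norm, ← norm_neg, neg_sub, hpv]
      linarith
    obtain ⟨hM1, hM2⟩ := hbl p (ne_of_gt hr0) p hpmem v hvmem
    rw [hpv] at hM1 hM2
    set M := ‖F p - F v‖ with hMdef
    have hM0 : 0 ≤ M := norm_nonneg _
    set s := d ^ ((1:ℝ) / (1 + α)) with hsdef
    have hs0 : 0 < s := Real.rpow_pos_of_pos hd0 _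
    have hds : d ^ (α / (1 + α)) * s = d := by
      rw [hsdef, ← Real.rpow_add hd0, hsum, Real.rpow_one]
    have hdb0 : 0 < d ^ (α / (1 + α)) := Real.rpow_pos_of_pos hd0 _
    have hrb_lb : d ^ (α / (1 + α)) ≤ r ^ (α / (1 + α)) :=
      Real.rpow_le_rpow hd0.le hr1 hβ0
    have hrb_ub : r ^ (α / (1 + α)) ≤ 5 * d ^ (α / (1 + α)) := by
      calc r ^ (α / (1 + α)) ≤ (5 * d) ^ (α / (1 + α)) :=
            Real.rpow_le_rpow hr0.le hr2 hβ0
        _ = 5 ^ (α / (1 + α)) * d ^ (α / (1 + α)) :=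
            Real.mul_rpow (by norm_num) hd0.le
        _ ≤ 5 * d ^ (α / (1 + α)) := by
            have h5 : (5:ℝ) ^ (α / (1 + α)) ≤ 5 := by
              calc (5:ℝ) ^ (α / (1 + α)) ≤ (5:ℝ) ^ (1:ℝ) :=
                    Real.rpow_le_rpow_of_exponent_le (by norm_num) hβ1
                _ = 5 := Real.rpow_one 5
            exact mul_le_mul_of_nonneg_right h5 hdb0.le
    -- upper bound on M
    have hMupper : M ≤ lam * s := by
      have h1 : d ^ (α / (1 + α)) * M ≤ lam * (d/3) := by
        calc d ^ (α / (1 + α)) * M ≤ r ^ (α / (1 + α)) * M :=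
              mul_le_mul_of_nonneg_right hrb_lb hM0
          _ ≤ lam * (d/3) := hM2
      have h2 : d ^ (α / (1 + α)) * M ≤ d ^ (α / (1 + α)) * (lam * s) := by
        have : lam * (d/3) ≤ lam * d := by
          have : d / 3 ≤ d := by linarith
          exact mul_le_mul_of_nonneg_left this hlam0.le
        calc d ^ (α / (1 + α)) * M ≤ lam * d := le_trans h1 this
          _ = lam * (d ^ (α / (1 + α)) * s) := by rw [hds]
          _ = d ^ (α / (1 + α)) * (lam * s) := by ring
      exact le_of_mul_le_mul_left h2 hdb0
    -- lower bound on M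
    have hMlower : lam⁻¹ * s / 15 ≤ M := by
      have h1 : lam⁻¹ * (d/3) ≤ (5 * d ^ (α / (1 + α))) * M := by
        calc lam⁻¹ * (d/3) ≤ r ^ (α / (1 + α)) * M := hM1
          _ ≤ (5 * d ^ (α / (1 + α))) * M := mul_le_mul_of_nonneg_right hrb_ub hM0
      have h2 : d ^ (α / (1 + α)) * (lam⁻¹ * s / 15) ≤ d ^ (α / (1 + α)) * M := by
        have hd15 : lam⁻¹ * (d/3) = d ^ (α / (1 + α)) * (lam⁻¹ * s) / 3 := by
          rw [show d ^ (α / (1 + α)) * (lam⁻¹ * s) = lam⁻¹ * (d ^ (α / (1 + α)) * s) by ring,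
            hds]; ring
        rw [hd15] at h1
        linarith
      exact le_of_mul_le_mul_left h2 hdb0
    -- quasisymmetry transfers
    have q1 : ‖F x - F y‖ ≤ η (1/2) * ‖F x - F p‖ := by
      refine hqs x y p (1/2) (by norm_num) ?_
      rw [hxp]; linarith
    have q2 : ‖F p - F x‖ ≤ η 9 * ‖F p - F v‖ := by
      refine hqs p x v 9 (by norm_num) ?_
      rw [hpx, hpv]; linarith
    have q3 : ‖F p - F v‖ ≤ η (1/9) * ‖F p - F x‖ := by
      refine hqs p v x (1/9) (by norm_num) ?_
      rw [hpv, hpx]; linarith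
    have q4 : ‖F x - F p‖ ≤ η 3 * ‖F x - F y‖ := by
      refine hqs x p y 3 (by norm_num) ?_
      rw [hxp]
    have hFxp : ‖F x - F p‖ = ‖F p - F x‖ := norm_sub_rev _ _
    have hη12 := hηpos (1/2) (by norm_num)
    have hη9 := hηpos 9 (by norm_num)
    have hη19 := hηpos (1/9) (by norm_num)
    have hη3 := hηpos 3 (by norm_num)
    constructor
    · -- lower bound
      rw [inv_mul_le_iff₀ hlam'0]
      have h1 : M ≤ η (1/9) * (η 3 * ‖F x - F y‖) := by
        calc M ≤ η (1/9) * ‖F p - F x‖ := q3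
          _ ≤ η (1/9) * (η 3 * ‖F x - F y‖) := by
              rw [← hFxp]
              exact mul_le_mul_of_nonneg_left q4 hη19.le
      calc s = 15 * lam * (lam⁻¹ * s / 15) := by
            field_simp
          _ ≤ 15 * lam * M := by
            exact mul_le_mul_of_nonneg_left hMlower (by positivity)
          _ ≤ 15 * lam * (η (1/9) * (η 3 * ‖F x - F y‖)) :=
            mul_le_mul_of_nonneg_left h1 (by positivity)
          _ = (15 * lam * η (1/9) * η 3) * ‖F x - F y‖ := by ring
          _ ≤ lam' * ‖F x - F y‖ := by
            refine mul_le_mul_of_nonneg_right ?_ (norm_nonneg _)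
            rw [hlam'def]; linarith
    · -- upper bound
      calc ‖F x - F y‖ ≤ η (1/2) * ‖F x - F p‖ := q1
          _ ≤ η (1/2) * (η 9 * M) := by
            rw [hFxp]
            exact mul_le_mul_of_nonneg_left q2 hη12.le
          _ ≤ η (1/2) * (η 9 * (lam * s)) := by
            refine mul_le_mul_of_nonneg_left ?_ hη12.le
            exact mul_le_mul_of_nonneg_left hMupper hη9.le
          _ = (lam * η (1/2) * η 9) * s := by ring
          _ ≤ lam' * s := by
            refine mul_le_mul_of_nonneg_right ?_ hs0.le
            rw [hlam'def]; linarith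
end

section
/- Let N ≥ 0, n ≥ 1 be integers and M = 9^{n(N+2)}. Let M' = (M-5)^{N+1}/2^{N+1}. Then 2(M-3)M' ≥ (M^{N+2-1/n} - A)/2, where A = M + (M-3)(M-5)·((M-5)^{N} - 2^{N})/(2^{N+1}(M-7)). In particular, 2(M-3)M' = (M-3)(M-5)^{N+1}/2^N ≥ ((M-5)/2)^{N+2} ≥ M^{N+2-1/n}. -/
open Real

/-- The key counting inequality for the construction of the path `J_I(N,n)`,
with `M = 9^{n(N+2)}`. -/
theorem stmt_12 (N n : ℕ) (hn : 1 ≤ n) (M M' A : ℝ)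
    (hM : M = 9 ^ (n * (N + 2)))
    (hM' : M' = (M - 5) ^ (N + 1) / 2 ^ (N + 1))
    (hA : A = M + (M - 3) * (M - 5) * ((M - 5) ^ N - 2 ^ N) / (2 ^ (N + 1) * (M - 7))) :
    2 * (M - 3) * M' ≥ (M ^ ((N : ℝ) + 2 - 1 / n) - A) / 2 ∧
    2 * (M - 3) * M' = (M - 3) * (M - 5) ^ (N + 1) / 2 ^ N ∧
    (M - 3) * (M - 5) ^ (N + 1) / 2 ^ N ≥ ((M - 5) / 2) ^ (N + 2) ∧
    ((M - 5) / 2) ^ (N + 2) ≥ M ^ ((N : ℝ) + 2 - 1 / n) := by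
  have hn0 : (0:ℝ) < n := by exact_mod_cast hn
  set k := n * (N + 2) with hk
  have hk2 : 2 ≤ k := by
    have : 1 * 2 ≤ n * (N + 2) := Nat.mul_le_mul hn (by omega)
    omega
  have h1k : 1 ≤ k := by omega
  have h81 : (81:ℝ) ≤ M := by
    rw [hM]
    calc (81:ℝ) = 9 ^ 2 := by norm_num
    _ ≤ 9 ^ k := pow_le_pow_right₀ (by norm_num) hk2
  have hM9 : M / 9 = (9:ℝ) ^ (k - 1) := by
    rw [hM, show k = (k-1)+1 by omega, pow_succ]
    field_simp
    simp
  have hkc : ((k:ℝ)) = (n:ℝ) * ((N:ℝ) + 2) := by rw [hk]; push_cast; ring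
  have hk1c : (((k-1:ℕ)):ℝ) = (k:ℝ) - 1 := by
    exact_mod_cast Nat.cast_sub (R := ℝ) h1k
  have hrpow : M ^ ((N:ℝ) + 2 - 1 / n) = (M / 9) ^ (N + 2) := by
    rw [hM9, hM]
    calc ((9:ℝ) ^ k) ^ ((N:ℝ) + 2 - 1 / n)
        = ((9:ℝ) ^ (k:ℝ)) ^ ((N:ℝ) + 2 - 1 / n) := by rw [Real.rpow_natCast]
      _ = (9:ℝ) ^ ((k:ℝ) * ((N:ℝ) + 2 - 1 / n)) := (Real.rpow_mul (by norm_num) _ _).symm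
      _ = (9:ℝ) ^ ((((k-1:ℕ)):ℝ) * (((N+2:ℕ)):ℝ)) := by
          congr 1
          rw [hk1c, hkc]
          push_cast
          field_simp
      _ = ((9:ℝ) ^ (((k-1:ℕ)):ℝ)) ^ (((N+2:ℕ)):ℝ) := Real.rpow_mul (by norm_num) _ _
      _ = ((9:ℝ) ^ (k-1)) ^ (N+2) := by rw [Real.rpow_natCast, Real.rpow_natCast]
  -- part 2 : equality
  have heq : 2 * (M - 3) * M' = (M - 3) * (M - 5) ^ (N + 1) / 2 ^ N := by
    rw [hM', pow_succ (2:ℝ) N]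
    field_simp
  -- part 3
  have hQ : (0:ℝ) ≤ (M - 5) ^ (N + 1) / 2 ^ N :=
    div_nonneg (pow_nonneg (by linarith) _) (by positivity)
  have h3 : (M - 3) * (M - 5) ^ (N + 1) / 2 ^ N ≥ ((M - 5) / 2) ^ (N + 2) := by
    have hsplit : ((M - 5) / 2) ^ (N + 2)
        = (M - 5) / 4 * ((M - 5) ^ (N + 1) / 2 ^ N) := by
      rw [div_pow]
      field_simp
      ring
    rw [hsplit]
    calc (M - 5) / 4 * ((M - 5) ^ (N + 1) / 2 ^ N)
        ≤ (M - 3) * ((M - 5) ^ (N + 1) / 2 ^ N) :=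
          mul_le_mul_of_nonneg_right (by linarith) hQ
      _ = (M - 3) * (M - 5) ^ (N + 1) / 2 ^ N := by ring
  -- part 4
  have h4 : ((M - 5) / 2) ^ (N + 2) ≥ M ^ ((N:ℝ) + 2 - 1 / n) := by
    rw [hrpow]
    exact pow_le_pow_left₀ (by linarith) (by linarith) _
  -- part 1
  have hX0 : (0:ℝ) ≤ M ^ ((N:ℝ) + 2 - 1 / n) := Real.rpow_nonneg (by linarith) _
  have hA0 : 0 ≤ A := by
    rw [hA]
    have hp : (2:ℝ) ^ N ≤ (M - 5) ^ N := pow_le_pow_left₀ (by norm_num) (by linarith) N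
    have hfrac : 0 ≤ (M - 3) * (M - 5) * ((M - 5) ^ N - 2 ^ N) / (2 ^ (N + 1) * (M - 7)) := by
      apply div_nonneg
      · have : (0:ℝ) ≤ (M - 3) * (M - 5) := by nlinarith
        nlinarith
      · exact mul_nonneg (by positivity) (by linarith)
    linarith
  refine ⟨?_, heq, h3, h4⟩
  have : 2 * (M - 3) * M' ≥ M ^ ((N:ℝ) + 2 - 1 / n) := by
    rw [heq]; linarith
  linarith
end

section
/- For integers n ≥ 1 and N ≥ 0, with M = 9^{n(N+2)}, the inequality ((M-5)/2)^{N+2} ≥ M^{N+2-1/n} holds. -/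
open Real

/-- The core numerical inequality: for `M = 9^{n(N+2)}`,
`((M-5)/2)^{N+2} ≥ M^{N+2-1/n}`. -/
theorem stmt_13 (N n : ℕ) (hn : 1 ≤ n) (M : ℝ) (hM : M = 9 ^ (n * (N + 2))) :
    ((M - 5) / 2) ^ (N + 2) ≥ M ^ ((N : ℝ) + 2 - 1 / n) := by
  have hn' : (n : ℝ) ≠ 0 := Nat.cast_ne_zero.2 (by omega)
  have hM81 : (81 : ℝ) ≤ M := by
    rw [hM]
    calc (81 : ℝ) = 9 ^ 2 := by norm_num
    _ ≤ 9 ^ (n * (N + 2)) := by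
        apply pow_le_pow_right₀ (by norm_num)
        nlinarith [hn, Nat.zero_le N]
  have hMpos : (0 : ℝ) < M := by linarith
  have hroot : M ^ ((1 : ℝ) / n) = 9 ^ (N + 2 : ℕ) := by
    rw [hM, ← Real.rpow_natCast (9 : ℝ) (n * (N + 2)), ← Real.rpow_natCast (9 : ℝ) (N + 2),
      ← Real.rpow_mul (by norm_num)]
    congr 1
    push_cast
    field_simp
  have key : M ^ ((N : ℝ) + 2 - 1 / n) = (M / 9) ^ (N + 2) := by
    rw [Real.rpow_sub hMpos, hroot]
    rw [show ((N : ℝ) + 2) = ((N + 2 : ℕ) : ℝ) by push_cast; ring, Real.rpow_natCast]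
    rw [div_pow]
  rw [ge_iff_le, key]
  apply pow_le_pow_left₀ (by positivity)
  rw [div_le_div_iff₀ (by norm_num) (by norm_num)]
  linarith
end

section
/- Let α ≥ 0 and let x = (x₁, x₂), y = (y₁, y₂) ∈ ℝ² with |x₁| ≥ |y₁| and |x₂ - y₂| ≥ |x₁|^{1+α}/2. Then the Grushin quasidistance satisfies d_α(x, y) ≤ C |x₂ - y₂|^{1/(1+α)} and d_α(x, y) ≥ C^{-1} |x₂ - y₂|^{1/(1+α)}, where C depends only on an upper bound for α. -/
open Real

/-- Snowflake regime: when the vertical displacement dominates, the Grushin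
quasidistance is comparable to `|x₂-y₂|^{1/(1+α)}`, with constants depending
only on the upper bound `m` for `α`. -/
theorem stmt_17 (m : ℝ) (hm : 0 ≤ m) :
    ∃ C : ℝ, 1 < C ∧ ∀ α ∈ Set.Icc (0 : ℝ) m, ∀ x₁ x₂ y₁ y₂ : ℝ,
      |y₁| ≤ |x₁| → |x₁| ^ (1 + α) / 2 ≤ |x₂ - y₂| →
      grushinDist α (x₁, x₂) (y₁, y₂) ≤ C * |x₂ - y₂| ^ (1 / (1 + α)) ∧
      C⁻¹ * |x₂ - y₂| ^ (1 / (1 + α)) ≤ grushinDist α (x₁, x₂) (y₁, y₂) := by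
  refine ⟨5, by norm_num, ?_⟩
  rintro α ⟨hα0, hαm⟩ x₁ x₂ y₁ y₂ hy hd
  simp only [grushinDist]
  set a := |x₂ - y₂| with ha_def
  have ha : 0 ≤ a := abs_nonneg _
  have h1α : (0:ℝ) < 1 + α := by linarith
  set p := 1 / (1 + α) with hp_def
  have hp0 : 0 < p := by positivity
  have hp1 : p ≤ 1 := by
    rw [hp_def, div_le_one h1α]; linarith
  have hmul : (1 + α) * p = 1 := by rw [hp_def]; field_simp
  have h2a : |x₁| ^ (1 + α) ≤ 2 * a := by linarith
  have hap : 0 ≤ a ^ p := Real.rpow_nonneg ha p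
  -- |x₁| ≤ (2a)^p
  have hx1' : |x₁| ≤ (2 * a) ^ p := by
    calc |x₁| = (|x₁| ^ (1 + α)) ^ p := by
          rw [← Real.rpow_mul (abs_nonneg _), hmul, Real.rpow_one]
      _ ≤ (2 * a) ^ p := Real.rpow_le_rpow (by positivity) h2a hp0.le
  have h2p : (2:ℝ) ^ p ≤ 2 := by
    calc (2:ℝ) ^ p ≤ (2:ℝ) ^ (1:ℝ) :=
          Real.rpow_le_rpow_of_exponent_le (by norm_num) hp1
      _ = 2 := Real.rpow_one 2
  have hx1 : |x₁| ≤ 2 * a ^ p := by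
    calc |x₁| ≤ (2 * a) ^ p := hx1'
      _ = 2 ^ p * a ^ p := Real.mul_rpow (by norm_num) ha
      _ ≤ 2 * a ^ p := mul_le_mul_of_nonneg_right h2p hap
  -- the if-term is at most a^p
  have hif_le : (if x₁ = 0 then a ^ p else min (a ^ p) (a / |x₁| ^ α)) ≤ a ^ p := by
    split
    · exact le_rfl
    · exact min_le_left _ _
  constructor
  · -- upper bound
    have h1 : |x₁ - y₁| ≤ 2 * |x₁| := by
      calc |x₁ - y₁| ≤ |x₁| + |y₁| := abs_sub _ _
        _ ≤ 2 * |x₁| := by linarith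
    calc |x₁ - y₁| + (if x₁ = 0 then a ^ p else min (a ^ p) (a / |x₁| ^ α))
        ≤ 2 * |x₁| + a ^ p := add_le_add h1 hif_le
      _ ≤ 2 * (2 * a ^ p) + a ^ p := by linarith [mul_le_mul_of_nonneg_left hx1 (by norm_num : (0:ℝ) ≤ 2)]
      _ = 5 * a ^ p := by ring
  · -- lower bound
    have hkey : a ^ p / 2 ≤ (if x₁ = 0 then a ^ p else min (a ^ p) (a / |x₁| ^ α)) := by
      by_cases hx0 : x₁ = 0
      · simp only [hx0, if_true]; linarith
      · rw [if_neg hx0]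
        refine le_min (by linarith) ?_
        have hx1pos : 0 < |x₁| := abs_pos.mpr hx0
        have hxa : 0 < |x₁| ^ α := Real.rpow_pos_of_pos hx1pos α
        have hapos : 0 < a := by
          have := Real.rpow_pos_of_pos hx1pos (1 + α)
          linarith
        -- a^p * |x₁|^α ≤ 2 * a
        have hcross : a ^ p * |x₁| ^ α ≤ 2 * a := by
          have hxα : |x₁| ^ α ≤ (2 * a) ^ (p * α) := by
            calc |x₁| ^ α ≤ ((2 * a) ^ p) ^ α :=
                  Real.rpow_le_rpow (abs_nonneg _) hx1' hα0
              _ = (2 * a) ^ (p * α) := by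
                  rw [← Real.rpow_mul (by positivity)]
          have hpa1 : p * α ≤ 1 := by
            rw [hp_def]
            rw [div_mul_eq_mul_div, div_le_one h1α]
            linarith
          have hpa0 : 0 ≤ p * α := by positivity
          have h2pa : (2:ℝ) ^ (p * α) ≤ 2 := by
            calc (2:ℝ) ^ (p * α) ≤ (2:ℝ) ^ (1:ℝ) :=
                  Real.rpow_le_rpow_of_exponent_le (by norm_num) hpa1
              _ = 2 := Real.rpow_one 2
          have hsum : p + p * α = 1 := by rw [hp_def]; field_simp
          calc a ^ p * |x₁| ^ α ≤ a ^ p * (2 * a) ^ (p * α) :=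
                mul_le_mul_of_nonneg_left hxα hap
            _ = a ^ p * (2 ^ (p * α) * a ^ (p * α)) := by
                rw [Real.mul_rpow (by norm_num) ha]
            _ ≤ a ^ p * (2 * a ^ (p * α)) :=
                mul_le_mul_of_nonneg_left
                  (mul_le_mul_of_nonneg_right h2pa (Real.rpow_nonneg ha _)) hap
            _ = 2 * (a ^ p * a ^ (p * α)) := by ring
            _ = 2 * a ^ (p + p * α) := by
                rw [← Real.rpow_add hapos]
            _ = 2 * a := by rw [hsum, Real.rpow_one]
        rw [div_le_div_iff₀ (by norm_num) hxa]
        linarith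
    have : (5:ℝ)⁻¹ * a ^ p ≤ a ^ p / 2 := by linarith
    calc (5:ℝ)⁻¹ * a ^ p ≤ a ^ p / 2 := this
      _ ≤ (if x₁ = 0 then a ^ p else min (a ^ p) (a / |x₁| ^ α)) := hkey
      _ ≤ |x₁ - y₁| + (if x₁ = 0 then a ^ p else min (a ^ p) (a / |x₁| ^ α)) :=
          le_add_of_nonneg_left (abs_nonneg _)
end
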